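/- Let (L, v) be a complete non-archimedean valued field and let τ : L → L be a ring homomorphism satisfying v(τ(x)) = q·v(x) for all x ∈ L, where q > 1. Let G ∈ L with v(G − 1) > 0. Then the infinite product β = ∏_{i≥0} τ^i(G) converges in L to a unit, and α := β^{-1} satisfies τ(α) = G·α. -/

import Mathlib

open Filter

/-- Let `(L, ‖·‖)` be a complete non-archimedean valued field and
`τ : L → L` a ring homomorphism with `v(τ x) = q·v(x)` (multiplicatively:
`‖τ x‖ = ‖x‖^q`) for a fixed real `q > 1`. If `G ∈ L` satisfies `v(G − 1) > 0`
(i.e. `‖G − 1‖ < 1`), then the infinite product `β = ∏_{i≥0} τ^i(G)` converges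
in `L` to a unit, and `α := β⁻¹` satisfies `τ(α) = G·α`. -/
theorem stmt5 {L : Type*} [NormedField L] [CompleteSpace L]
    (hultra : ∀ x y : L, ‖x + y‖ ≤ max ‖x‖ ‖y‖)
    (q : ℝ) (hq : 1 < q)
    (τ : L →+* L) (hτ : ∀ x : L, ‖τ x‖ = ‖x‖ ^ q)
    (G : L) (hG : ‖G - 1‖ < 1) :
    ∃ β : Lˣ,
      Tendsto (fun n : ℕ => ∏ i ∈ Finset.range n, (⇑τ)^[i] G) atTop (nhds (β : L)) ∧
        τ ((β : L)⁻¹) = G * (β : L)⁻¹ := by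
  by_cases hG1 : G = 1
  · subst hG1
    have hone : ∀ n : ℕ, ∏ i ∈ Finset.range n, (⇑τ)^[i] (1 : L) = 1 := by
      intro n
      simp [Function.iterate_fixed (map_one τ)]
    refine ⟨1, ?_, by simp⟩
    simp only [hone, Units.val_one]
    exact tendsto_const_nhds
  · set r := ‖G - 1‖ with hrdef
    have hr0 : 0 < r := norm_pos_iff.2 (sub_ne_zero.2 hG1)
    have hq0 : 0 < q := by linarith
    have hG0 : G ≠ 0 := by
      intro h
      have h1 : ‖G - 1‖ < 1 := hG
      rw [h, zero_sub, norm_neg, norm_one] at h1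
      exact lt_irrefl 1 h1
    set P : ℕ → L := fun n => ∏ i ∈ Finset.range n, (⇑τ)^[i] G with hPdef
    -- norm of iterates
    have hiter : ∀ (i : ℕ) (x : L), ‖(⇑τ)^[i] x‖ = ‖x‖ ^ (q ^ i) := by
      intro i
      induction i with
      | zero => intro x; simp
      | succ i ih =>
        intro x
        rw [Function.iterate_succ_apply', hτ, ih,
          ← Real.rpow_mul (norm_nonneg x), ← pow_succ]
    have hsub : ∀ i : ℕ, (⇑τ)^[i] G - 1 = (⇑τ)^[i] (G - 1) := by
      intro i
      induction i with
      | zero => simp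
      | succ i ih =>
        rw [Function.iterate_succ_apply', Function.iterate_succ_apply', ← ih,
          map_sub, map_one]
    have hai : ∀ i : ℕ, ‖(⇑τ)^[i] G - 1‖ = r ^ (q ^ i) := by
      intro i; rw [hsub, hiter]
    have hqi1 : ∀ i : ℕ, (1 : ℝ) ≤ q ^ i := fun i => one_le_pow₀ hq.le
    have hrle : ∀ i : ℕ, r ^ (q ^ i) ≤ r := by
      intro i
      calc r ^ (q ^ i) ≤ r ^ (1 : ℝ) :=
            Real.rpow_le_rpow_of_exponent_ge hr0 hG.le (hqi1 i)
        _ = r := Real.rpow_one r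
    have hnormP : ∀ n, ‖P n - 1‖ ≤ r := by
      intro n
      induction n with
      | zero => simpa [hPdef] using hr0.le
      | succ n ih =>
        have hPle1 : ‖P n‖ ≤ 1 := by
          have := hultra (P n - 1) 1
          simp only [sub_add_cancel, norm_one] at this
          exact this.trans (max_le (ih.trans hG.le) le_rfl)
        have hdecomp : P (n + 1) - 1 = P n * ((⇑τ)^[n] G - 1) + (P n - 1) := by
          simp only [hPdef, Finset.prod_range_succ]
          ring
        rw [hdecomp]
        refine (hultra _ _).trans (max_le ?_ ih)
        rw [norm_mul, hai]
        calc ‖P n‖ * r ^ (q ^ n) ≤ 1 * r := by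
              exact mul_le_mul hPle1 (hrle n) (Real.rpow_nonneg hr0.le _) zero_le_one
          _ = r := one_mul r
    have hPle1 : ∀ n, ‖P n‖ ≤ 1 := by
      intro n
      have := hultra (P n - 1) 1
      simp only [sub_add_cancel, norm_one] at this
      exact this.trans (max_le ((hnormP n).trans hG.le) le_rfl)
    -- Cauchy
    have hgeo : r ^ (q - 1) < 1 := Real.rpow_lt_one hr0.le hG (by linarith)
    have hcau : CauchySeq P := by
      refine cauchySeq_of_le_geometric (r ^ (q - 1)) r hgeo (fun n => ?_)
      rw [dist_eq_norm]
      have h1 : P n - P (n + 1) = P n * (1 - (⇑τ)^[n] G) := by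
        simp only [hPdef, Finset.prod_range_succ]; ring
      rw [h1, norm_mul, norm_sub_rev, hai]
      have hb : (1 : ℝ) + (n : ℝ) * (q - 1) ≤ q ^ n := by
        have := one_add_mul_le_pow (by linarith : (-2 : ℝ) ≤ q - 1) n
        simpa using this
      have h2 : r ^ (q ^ n) ≤ r ^ ((1 : ℝ) + (n : ℝ) * (q - 1)) :=
        Real.rpow_le_rpow_of_exponent_ge hr0 hG.le hb
      have h3 : r ^ ((1 : ℝ) + (n : ℝ) * (q - 1)) = r * (r ^ (q - 1)) ^ n := by
        rw [Real.rpow_add hr0, Real.rpow_one, mul_comm (n : ℝ),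
          Real.rpow_mul hr0.le, Real.rpow_natCast]
      calc ‖P n‖ * r ^ (q ^ n) ≤ 1 * (r * (r ^ (q - 1)) ^ n) := by
            refine mul_le_mul (hPle1 n) (h2.trans_eq h3) (Real.rpow_nonneg hr0.le _) zero_le_one
        _ = r * (r ^ (q - 1)) ^ n := one_mul _
    obtain ⟨b, hb⟩ := cauchySeq_tendsto_of_complete hcau
    have hbnorm : ‖b - 1‖ ≤ r := by
      have h : Tendsto (fun n => ‖P n - 1‖) atTop (nhds ‖b - 1‖) :=
        ((hb.sub tendsto_const_nhds).norm)
      exact le_of_tendsto h (Eventually.of_forall hnormP)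
    have hb0 : b ≠ 0 := by
      intro h
      rw [h] at hbnorm
      simp at hbnorm
      linarith
    -- τ applied to the limit
    have hτc : Tendsto (fun n => τ (P n)) atTop (nhds (τ b)) := by
      rw [tendsto_iff_norm_sub_tendsto_zero]
      have h1 : Tendsto (fun n => ‖P n - b‖) atTop (nhds 0) :=
        tendsto_iff_norm_sub_tendsto_zero.1 hb
      have h2 : Tendsto (fun n => ‖P n - b‖ ^ q) atTop (nhds ((0 : ℝ) ^ q)) :=
        h1.rpow_const (Or.inr hq0.le)
      rw [Real.zero_rpow hq0.ne'] at h2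
      refine h2.congr fun n => ?_
      rw [← hτ, map_sub]
    have hrec : ∀ n, P (n + 1) = τ (P n) * G := by
      intro n
      simp only [hPdef, map_prod, Finset.prod_range_succ']
      congr 1
      refine Finset.prod_congr rfl fun i _ => ?_
      rw [Function.iterate_succ_apply']
    have h2 : Tendsto (fun n => P (n + 1)) atTop (nhds b) :=
      hb.comp (tendsto_add_atTop_nat 1)
    have h3 : Tendsto (fun n => τ (P n) * G) atTop (nhds (τ b * G)) :=
      hτc.mul tendsto_const_nhds
    have hEq : τ b * G = b := by
      refine tendsto_nhds_unique ?_ h2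
      exact h3.congr fun n => (hrec n).symm
    have hτb0 : τ b ≠ 0 := fun h => hb0 (by rw [← hEq, h, zero_mul])
    refine ⟨Units.mk0 b hb0, ?_, ?_⟩
    · simpa using hb
    · simp only [Units.val_mk0]
      have h4 : b⁻¹ = (τ b * G)⁻¹ := by rw [hEq]
      rw [map_inv₀, h4, mul_inv]
      field_simp
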